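/- Let k, ℓ, m be distinct positive integers with ℓ < m, and let g = gcd(k, m − ℓ). Then there exists a complex number z with |z| = 1 such that |1 + z^k + z^ℓ + z^m| ≤ πg/k. -/

import Mathlib

open Real

lemma odd_bezout (a b : ℤ) (h : IsCoprime a b) :
    ∃ t u : ℤ, Odd t ∧ Odd u ∧ |t * a - u * b| ≤ 1 := by
  obtain ⟨x, y, hxy⟩ := h
  rcases Int.even_or_odd a with ha | ha
  · -- a even : then y*b is odd, so (-y) is odd and b is odd
    have hyb : Odd (y * b) := by
      obtain ⟨r, hr⟩ := ha.mul_left x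
      exact ⟨-r, by linarith⟩
    have hy : Odd y := (Int.odd_mul.mp hyb).1
    have hb : Odd b := (Int.odd_mul.mp hyb).2
    rcases Int.even_or_odd x with hx | hx
    · refine ⟨x + b, -y + a, hx.add_odd hb, hy.neg.add_even ha, ?_⟩
      have : (x + b) * a - (-y + a) * b = 1 := by ring_nf; linarith
      rw [this]; norm_num
    · refine ⟨x, -y, hx, hy.neg, ?_⟩
      have : x * a - (-y) * b = 1 := by ring_nf; linarith
      rw [this]; norm_num
  · rcases Int.even_or_odd b with hb | hb
    · -- b even, a odd : x*a odd so x odd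
      have hxa : Odd (x * a) := by
        obtain ⟨r, hr⟩ := hb.mul_left y
        exact ⟨-r, by linarith⟩
      have hx : Odd x := (Int.odd_mul.mp hxa).1
      rcases Int.even_or_odd y with hy | hy
      · refine ⟨x + b, -y + a, hx.add_even hb, (hy.neg).add_odd ha, ?_⟩
        have : (x + b) * a - (-y + a) * b = 1 := by ring_nf; linarith
        rw [this]; norm_num
      · refine ⟨x, -y, hx, hy.neg, ?_⟩
        have : x * a - (-y) * b = 1 := by ring_nf; linarith
        rw [this]; norm_num
    · refine ⟨b, a, hb, ha, ?_⟩
      have : b * a - a * b = 0 := by ring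
      rw [this]; norm_num

theorem stmt_17 (k l m : ℕ) (hk : 0 < k) (hl : 0 < l) (hm : 0 < m)
    (hkl : k ≠ l) (hkm : k ≠ m) (hlm : l < m) :
    ∃ z : ℂ, ‖z‖ = 1 ∧
      ‖1 + z ^ k + z ^ l + z ^ m‖ ≤ π * (Nat.gcd k (m - l)) / k := by
  set d := m - l with hdd
  have hd : 0 < d := Nat.sub_pos_of_lt hlm
  have hdm : l + d = m := by omega
  set g := Nat.gcd k d with hg
  have hgpos : 0 < g := Nat.gcd_pos_of_pos_left d hk
  have hco : Nat.Coprime (d / g) (k / g) := by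
    have := Nat.coprime_div_gcd_div_gcd (m := k) (n := d) hgpos
    exact this.symm
  obtain ⟨t, u, ht, hu, htu⟩ := odd_bezout ((d / g : ℕ) : ℤ) ((k / g : ℕ) : ℤ)
    (by exact_mod_cast Nat.isCoprime_iff_coprime.mpr hco)
  have key : |t * (d : ℤ) - u * (k : ℤ)| ≤ (g : ℤ) := by
    have h1 : ((d / g : ℕ) : ℤ) * g = d := by
      exact_mod_cast Nat.div_mul_cancel (Nat.gcd_dvd_right k d)
    have h2 : ((k / g : ℕ) : ℤ) * g = k := by
      exact_mod_cast Nat.div_mul_cancel (Nat.gcd_dvd_left k d)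
    have : t * (d : ℤ) - u * (k : ℤ) = (t * ((d / g : ℕ) : ℤ) - u * ((k / g : ℕ) : ℤ)) * g := by
      rw [sub_mul, mul_assoc, mul_assoc, h1, h2]
    rw [this, abs_mul]
    calc |t * ((d / g : ℕ) : ℤ) - u * ((k / g : ℕ) : ℤ)| * |(g : ℤ)|
        ≤ 1 * |(g : ℤ)| := by gcongr
      _ = (g : ℤ) := by rw [one_mul, abs_of_nonneg (by positivity)]
  have keyR : |(t : ℝ) * d - u * k| ≤ (g : ℝ) := by exact_mod_cast key
  have hk0 : (k : ℝ) ≠ 0 := Nat.cast_ne_zero.mpr hk.ne'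
  set θ : ℝ := t * π / k with hθ
  refine ⟨Complex.exp (θ * Complex.I), Complex.norm_exp_ofReal_mul_I θ, ?_⟩
  set z := Complex.exp (θ * Complex.I) with hz
  have hzpow : ∀ n : ℕ, z ^ n = Complex.exp (((n * θ : ℝ) : ℂ) * Complex.I) := by
    intro n
    rw [hz, ← Complex.exp_nat_mul]
    push_cast
    ring_nf
  have hzk : z ^ k = -1 := by
    rw [hzpow k]
    have hk0c : (k : ℂ) ≠ 0 := Nat.cast_ne_zero.mpr hk.ne'
    have : ((k * θ : ℝ) : ℂ) * Complex.I = (t : ℂ) * (π * Complex.I) := by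
      rw [hθ]
      push_cast
      field_simp
    rw [this, Complex.exp_int_mul, Complex.exp_pi_mul_I, ht.neg_one_zpow]
  have hsum : 1 + z ^ k + z ^ l + z ^ m = z ^ l * (1 + z ^ d) := by
    rw [hzk, ← hdm, pow_add]
    ring
  rw [hsum, norm_mul, norm_pow, Complex.norm_exp_ofReal_mul_I θ, one_pow, one_mul]
  -- now bound |1 + z^d|
  set φ : ℝ := d * θ with hφ
  have hzd : 1 + z ^ d = Complex.exp (((φ / 2 : ℝ) : ℂ) * Complex.I) *
      (2 * Complex.cos ((φ / 2 : ℝ) : ℂ)) := by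
    rw [hzpow d, Complex.two_cos, mul_add, ← Complex.exp_add, ← Complex.exp_add]
    have e1 : ((φ / 2 : ℝ) : ℂ) * Complex.I + ((φ / 2 : ℝ) : ℂ) * Complex.I
        = ((φ : ℝ) : ℂ) * Complex.I := by push_cast; ring
    have e2 : ((φ / 2 : ℝ) : ℂ) * Complex.I + -((φ / 2 : ℝ) : ℂ) * Complex.I = 0 := by ring
    rw [e1, e2, Complex.exp_zero]
    ring
  rw [hzd, norm_mul, Complex.norm_exp_ofReal_mul_I, one_mul, ← Complex.ofReal_cos,
    ← Complex.ofReal_ofNat, ← Complex.ofReal_mul, Complex.norm_real, Real.norm_eq_abs]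
  -- |2 * cos (φ/2)| ≤ π * g / k
  obtain ⟨c, hc⟩ := hu
  have hcos : |Real.cos (φ / 2)| ≤ |π / 2 - φ / 2 + c * π| := by
    calc |Real.cos (φ / 2)| = |Real.sin (π / 2 - φ / 2 + c * π)| := by
          rw [Real.sin_add_int_mul_pi, Real.sin_pi_div_two_sub, abs_mul]
          rcases Int.even_or_odd c with hc2 | hc2
          · rw [hc2.neg_one_zpow]; simp
          · rw [hc2.neg_one_zpow]; simp
      _ ≤ |π / 2 - φ / 2 + c * π| := Real.abs_sin_le_abs
  have harith : π / 2 - φ / 2 + c * π = (π / (2 * k)) * ((u : ℝ) * k - t * d) := by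
    rw [hφ, hθ, hc]
    push_cast
    field_simp
    ring
  have hfin : |Real.cos (φ / 2)| ≤ (π / (2 * k)) * g := by
    calc |Real.cos (φ / 2)| ≤ |π / 2 - φ / 2 + c * π| := hcos
      _ = (π / (2 * k)) * |(u : ℝ) * k - t * d| := by
          rw [harith, abs_mul, abs_of_nonneg (by positivity)]
      _ ≤ (π / (2 * k)) * g :=
          mul_le_mul_of_nonneg_left (by rw [abs_sub_comm]; exact keyR) (by positivity)
  rw [abs_mul, abs_two]
  calc 2 * |Real.cos (φ / 2)| ≤ 2 * ((π / (2 * k)) * g) := by gcongr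
    _ = π * g / k := by field_simp
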